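/- Let Θ_m ⊆ ℝ^d be a nonempty finite set and let A* be the Bayesian mixture algorithm with the uniform prior on Θ_m. Let θ* ∈ ℝ^d and η ≥ 0 be such that there exists a probability distribution Q supported on Θ_m with mean θ* (Σ_{θ∈Θ_m} Q(θ)·θ_i = θ*_i for each i), uncorrelated coordinates (Σ_θ Q(θ)(θ_i − θ*_i)(θ_j − θ*_j) = 0 for i ≠ j), and coordinate variances at most η² (Σ_θ Q(θ)(θ_i − θ*_i)² ≤ η² for each i). Then for every horizon T and every sequence S_T with ‖x_t‖_∞ ≤ 1 for all t, Regret(A*,S_T,θ*) ≤ log|Θ_m| + dTη²/8. -/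

import Mathlib

open MeasureTheory Real Filter

noncomputable section

/-- Dot product on `Fin d → ℝ`. -/
def dotp {d : ℕ} (x θ : Fin d → ℝ) : ℝ := ∑ i, x i * θ i

/-- Logistic model probability of label `y ∈ {−1,1}`: `p(y|x,θ) = 1/(1+exp(−y⟨x,θ⟩))`. -/
def lprob {d : ℕ} (θ x : Fin d → ℝ) (y : ℝ) : ℝ :=
  1 / (1 + Real.exp (-(y * dotp x θ)))

/-- Logistic loss `ℓ(θ,x,y) = log(1+exp(−y⟨x,θ⟩))`. -/
def lloss {d : ℕ} (θ x : Fin d → ℝ) (y : ℝ) : ℝ :=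
  Real.log (1 + Real.exp (-(y * dotp x θ)))

/-- Cumulative loss `L(θ,S_T)` of the parameter `θ` on the sequence `S`. -/
def seqLoss {d T : ℕ} (θ : Fin d → ℝ) (S : Fin T → (Fin d → ℝ) × ℝ) : ℝ :=
  ∑ t, lloss θ (S t).1 (S t).2

/-- An online algorithm: maps a history, a current feature vector and a label to a probability. -/
abbrev Alg (d : ℕ) := List ((Fin d → ℝ) × ℝ) → (Fin d → ℝ) → ℝ → ℝ

/-- Validity of an online algorithm: it assigns a probability distribution to the labels `{−1,1}`. -/
def ValidAlg {d : ℕ} (A : Alg d) : Prop :=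
  ∀ h x, 0 ≤ A h x 1 ∧ 0 ≤ A h x (-1) ∧ A h x 1 + A h x (-1) = 1

/-- Validity of a sequence: features have `‖x_t‖_∞ ≤ 1` and labels lie in `{−1,1}`. -/
def ValidSeq {d T : ℕ} (S : Fin T → (Fin d → ℝ) × ℝ) : Prop :=
  ∀ t, (∀ i, |(S t).1 i| ≤ 1) ∧ ((S t).2 = 1 ∨ (S t).2 = -1)

/-- Cumulative loss `L(A,S_T) = −∑_t log A(S_{t−1}, x_t, y_t)` of an online algorithm. -/
def algLoss {d T : ℕ} (A : Alg d) (S : Fin T → (Fin d → ℝ) × ℝ) : ℝ :=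
  -∑ t, Real.log (A ((List.ofFn S).take t.val) (S t).1 (S t).2)

/-- Regret of an online algorithm against a comparator `θ`. -/
def regret {d T : ℕ} (A : Alg d) (S : Fin T → (Fin d → ℝ) × ℝ) (θ : Fin d → ℝ) : ℝ :=
  algLoss A S - seqLoss θ S

/-- `∏_{(x,y) ∈ h} p(y|x,θ)` over a history `h`. -/
def histProb {d : ℕ} (θ : Fin d → ℝ) (h : List ((Fin d → ℝ) × ℝ)) : ℝ :=
  (h.map (fun s => lprob θ s.1 s.2)).prod

/-- Mixture probability `p(y^t|x^t) = ∫ ∏_τ p(y_τ|x_τ,θ) dp₀(θ)`. -/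
def mixProb {d : ℕ} (p₀ : Measure (Fin d → ℝ)) (h : List ((Fin d → ℝ) × ℝ)) : ℝ :=
  ∫ θ, histProb θ h ∂p₀

/-- The Bayesian mixture algorithm with prior `p₀`. -/
def bayesAlg {d : ℕ} (p₀ : Measure (Fin d → ℝ)) : Alg d :=
  fun h x y => mixProb p₀ (h ++ [(x, y)]) / mixProb p₀ h

/-- Discrete mixture probability for a prior given by a probability mass function `p₀`. -/
def mixProbD {d : ℕ} (p₀ : (Fin d → ℝ) → ℝ) (h : List ((Fin d → ℝ) × ℝ)) : ℝ :=
  ∑' θ, p₀ θ * histProb θ h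

/-- The Bayesian mixture algorithm with a discrete prior `p₀`. -/
def bayesAlgD {d : ℕ} (p₀ : (Fin d → ℝ) → ℝ) : Alg d :=
  fun h x y => mixProbD p₀ (h ++ [(x, y)]) / mixProbD p₀ h

/-- Kullback–Leibler divergence `D(Q‖p₀) = ∫ log (dQ/dp₀) dQ`. -/
def KL {d : ℕ} (Q p₀ : Measure (Fin d → ℝ)) : ℝ :=
  ∫ θ, Real.log (Q.rnDeriv p₀ θ).toReal ∂Q

/-- The label in `{−1,1}` encoded by a Boolean. -/
def signv : Bool → ℝ := fun b => if b then 1 else -1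

/-- Binary entropy function (with `h₂(0) = h₂(1) = 0`, since `Real.log 0 = 0`). -/
def binEnt (p : ℝ) : ℝ := -(p * Real.log p) - (1 - p) * Real.log (1 - p)

end


section Aux
open Real


noncomputable def sig (t : ℝ) : ℝ := Real.exp t / (1 + Real.exp t)

lemma hasDerivAt_logexp (t : ℝ) :
    HasDerivAt (fun u => Real.log (1 + Real.exp u)) (sig t) t := by
  have h1 : HasDerivAt (fun u => 1 + Real.exp u) (Real.exp t) t :=
    (Real.hasDerivAt_exp t).const_add 1
  have := h1.log (by positivity)
  simpa [sig] using this

lemma hasDerivAt_sig (t : ℝ) :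
    HasDerivAt sig (Real.exp t / (1 + Real.exp t) ^ 2) t := by
  have h1 : HasDerivAt (fun u => 1 + Real.exp u) (Real.exp t) t :=
    (Real.hasDerivAt_exp t).const_add 1
  have h2 := (Real.hasDerivAt_exp t).div h1 (by positivity)
  refine h2.congr_deriv ?_
  congr 1
  ring

lemma phi_antitone : Antitone (fun t => sig t - t / 4) := by
  have hd : ∀ t, HasDerivAt (fun t => sig t - t / 4)
      (Real.exp t / (1 + Real.exp t) ^ 2 - 1 / 4) t := by
    intro t
    exact (hasDerivAt_sig t).sub ((hasDerivAt_id t).div_const 4)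
  apply antitone_of_deriv_nonpos (fun t => (hd t).differentiableAt)
  intro t
  rw [(hd t).deriv]
  have he := Real.exp_pos t
  have h4 : 4 * Real.exp t ≤ (1 + Real.exp t) ^ 2 := by nlinarith [sq_nonneg (1 - Real.exp t)]
  rw [sub_nonpos, div_le_iff₀ (by positivity)]
  nlinarith

/-- Key pointwise quadratic bound for the log-loss potential. -/
lemma key_quad (v u : ℝ) :
    Real.log (1 + Real.exp u) ≤
      Real.log (1 + Real.exp v) + sig v * (u - v) + (u - v) ^ 2 / 8 := by
  set F : ℝ → ℝ := fun u => Real.log (1 + Real.exp v) + sig v * (u - v) + (u - v) ^ 2 / 8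
    - Real.log (1 + Real.exp u) with hF
  have hd : ∀ t, HasDerivAt F ((sig v - v / 4) - (sig t - t / 4)) t := by
    intro t
    have h1 : HasDerivAt (fun u : ℝ => sig v * (u - v)) (sig v) t := by
      simpa using (((hasDerivAt_id t).sub_const v).const_mul (sig v))
    have h2 : HasDerivAt (fun u : ℝ => (u - v) ^ 2 / 8) ((t - v) / 4) t := by
      have := (((hasDerivAt_id t).sub_const v).pow 2).div_const 8
      refine this.congr_deriv ?_
      simp [id]
      ring
    have h3 := ((h1.const_add (Real.log (1 + Real.exp v))).add h2).sub (hasDerivAt_logexp t)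
    refine h3.congr_deriv ?_
    ring
  have hFv : F v = 0 := by simp [hF]
  have hdiff : ∀ t, DifferentiableAt ℝ F t := fun t => (hd t).differentiableAt
  have hmain : 0 ≤ F u := by
    rcases le_total v u with h | h
    · have hmono : MonotoneOn F (Set.Ici v) := by
        apply monotoneOn_of_deriv_nonneg (convex_Ici v)
          (Continuous.continuousOn (by
            have : Differentiable ℝ F := hdiff
            exact this.continuous))
          (fun t _ => (hdiff t).differentiableWithinAt)
        intro t ht
        rw [(hd t).deriv, sub_nonneg]
        exact phi_antitone (le_of_lt (by simpa [interior_Ici] using ht))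
      have := hmono (Set.self_mem_Ici) (Set.mem_Ici.2 h) h
      linarith [hFv ▸ this]
    · have hanti : AntitoneOn F (Set.Iic v) := by
        apply antitoneOn_of_deriv_nonpos (convex_Iic v)
          (Continuous.continuousOn (by
            have : Differentiable ℝ F := hdiff
            exact this.continuous))
          (fun t _ => (hdiff t).differentiableWithinAt)
        intro t ht
        rw [(hd t).deriv, sub_nonpos]
        exact phi_antitone (le_of_lt (by simpa [interior_Iic] using ht))
      have := hanti (Set.mem_Iic.2 h) (Set.self_mem_Iic) h
      linarith [hFv ▸ this]
  simp only [hF] at hmain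
  linarith


lemma roundBound {d : ℕ} (Θm : Finset (Fin d → ℝ))
    (θs : Fin d → ℝ) (η : ℝ)
    (Q : (Fin d → ℝ) → ℝ) (hQ0 : ∀ θ, 0 ≤ Q θ)
    (hQ1 : ∑ θ ∈ Θm, Q θ = 1)
    (hmean : ∀ i, ∑ θ ∈ Θm, Q θ * θ i = θs i)
    (huncorr : ∀ i j, i ≠ j → ∑ θ ∈ Θm, Q θ * ((θ i - θs i) * (θ j - θs j)) = 0)
    (hvar : ∀ i, ∑ θ ∈ Θm, Q θ * (θ i - θs i) ^ 2 ≤ η ^ 2)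
    (x : Fin d → ℝ) (hx : ∀ i, |x i| ≤ 1) (y : ℝ) (hy : y = 1 ∨ y = -1) :
    ∑ θ ∈ Θm, Q θ * lloss θ x y ≤ lloss θs x y + d * η ^ 2 / 8 := by
  have hy2 : y ^ 2 = 1 := by rcases hy with h | h <;> simp [h]
  set v : ℝ := -(y * dotp x θs) with hv
  set Δ : (Fin d → ℝ) → ℝ := fun θ => ∑ i, x i * (θ i - θs i) with hΔ
  have hu : ∀ θ : Fin d → ℝ, -(y * dotp x θ) - v = -y * Δ θ := by
    intro θ
    simp only [hv, hΔ, dotp, Finset.mul_sum]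
    rw [sub_neg_eq_add, ← Finset.sum_neg_distrib, ← Finset.sum_add_distrib]
    exact Finset.sum_congr rfl fun i _ => by ring
  -- first moment
  have hδ : ∀ i, ∑ θ ∈ Θm, Q θ * (θ i - θs i) = 0 := by
    intro i
    have : ∑ θ ∈ Θm, Q θ * (θ i - θs i)
        = (∑ θ ∈ Θm, Q θ * θ i) - (∑ θ ∈ Θm, Q θ) * θs i := by
      rw [Finset.sum_mul, ← Finset.sum_sub_distrib]
      exact Finset.sum_congr rfl fun θ _ => by ring
    rw [this, hmean i, hQ1]; ring
  have hS1 : ∑ θ ∈ Θm, Q θ * (-(y * dotp x θ) - v) = 0 := by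
    have h1 : ∀ θ ∈ Θm, Q θ * (-(y * dotp x θ) - v)
        = ∑ i, (-y) * (x i * (Q θ * (θ i - θs i))) := by
      intro θ _
      rw [hu θ]
      simp only [hΔ, Finset.mul_sum]
      exact Finset.sum_congr rfl fun i _ => by ring
    rw [Finset.sum_congr rfl h1, Finset.sum_comm]
    refine Finset.sum_eq_zero fun i _ => ?_
    have h2 : ∑ θ ∈ Θm, (-y) * (x i * (Q θ * (θ i - θs i)))
        = (-y * x i) * ∑ θ ∈ Θm, Q θ * (θ i - θs i) := by
      rw [Finset.mul_sum]
      exact Finset.sum_congr rfl fun θ _ => by ring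
    rw [h2, hδ i, mul_zero]
  -- second moment
  have hS2 : ∑ θ ∈ Θm, Q θ * (-(y * dotp x θ) - v) ^ 2 ≤ d * η ^ 2 := by
    have hsq : ∀ θ, (-(y * dotp x θ) - v) ^ 2 = (Δ θ) ^ 2 := by
      intro θ; rw [hu θ, mul_pow, neg_sq, hy2, one_mul]
    have hexp : ∑ θ ∈ Θm, Q θ * (Δ θ) ^ 2
        = ∑ i, ∑ j, (x i * x j) * ∑ θ ∈ Θm, Q θ * ((θ i - θs i) * (θ j - θs j)) := by
      have e1 : ∀ θ ∈ Θm, Q θ * (Δ θ) ^ 2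
          = ∑ i, ∑ j, (x i * x j) * (Q θ * ((θ i - θs i) * (θ j - θs j))) := by
        intro θ _
        simp only [hΔ, sq]
        rw [Finset.sum_mul_sum, Finset.mul_sum]
        refine Finset.sum_congr rfl fun i _ => ?_
        rw [Finset.mul_sum]
        exact Finset.sum_congr rfl fun j _ => by ring
      rw [Finset.sum_congr rfl e1, Finset.sum_comm]
      refine Finset.sum_congr rfl fun i _ => ?_
      rw [Finset.sum_comm]
      refine Finset.sum_congr rfl fun j _ => ?_
      rw [Finset.mul_sum]
    have hdiag : ∀ i : Fin d, ∑ j, (x i * x j) * ∑ θ ∈ Θm, Q θ * ((θ i - θs i) * (θ j - θs j))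
        ≤ η ^ 2 := by
      intro i
      have : ∑ j, (x i * x j) * ∑ θ ∈ Θm, Q θ * ((θ i - θs i) * (θ j - θs j))
          = (x i * x i) * ∑ θ ∈ Θm, Q θ * ((θ i - θs i) * (θ i - θs i)) := by
        apply Finset.sum_eq_single
        · intro j _ hj
          rw [huncorr i j (Ne.symm hj)]; ring
        · intro h; exact absurd (Finset.mem_univ i) h
      rw [this]
      have h1 : x i * x i ≤ 1 := by
        have := abs_le.1 (hx i); nlinarith
      have h2 : 0 ≤ ∑ θ ∈ Θm, Q θ * ((θ i - θs i) * (θ i - θs i)) := by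
        apply Finset.sum_nonneg; intro θ _; exact mul_nonneg (hQ0 θ) (mul_self_nonneg _)
      have h3 : ∑ θ ∈ Θm, Q θ * ((θ i - θs i) * (θ i - θs i)) ≤ η ^ 2 := by
        refine le_trans (le_of_eq ?_) (hvar i)
        exact Finset.sum_congr rfl fun θ _ => by ring_nf
      calc (x i * x i) * ∑ θ ∈ Θm, Q θ * ((θ i - θs i) * (θ i - θs i))
          ≤ 1 * ∑ θ ∈ Θm, Q θ * ((θ i - θs i) * (θ i - θs i)) :=
            mul_le_mul_of_nonneg_right h1 h2
        _ ≤ η ^ 2 := by rw [one_mul]; exact h3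
    calc ∑ θ ∈ Θm, Q θ * (-(y * dotp x θ) - v) ^ 2
        = ∑ i, ∑ j, (x i * x j) * ∑ θ ∈ Θm, Q θ * ((θ i - θs i) * (θ j - θs j)) := by
          rw [← hexp]; exact Finset.sum_congr rfl fun θ _ => by rw [hsq θ]
      _ ≤ ∑ _i : Fin d, η ^ 2 := Finset.sum_le_sum fun i _ => hdiag i
      _ = d * η ^ 2 := by simp [mul_comm]
  -- combine
  have hkey : ∀ θ ∈ Θm, Q θ * lloss θ x y ≤
      Q θ * (lloss θs x y + sig v * (-(y * dotp x θ) - v) + (-(y * dotp x θ) - v) ^ 2 / 8) := by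
    intro θ _
    apply mul_le_mul_of_nonneg_left _ (hQ0 θ)
    simpa [lloss, hv] using key_quad v (-(y * dotp x θ))
  calc ∑ θ ∈ Θm, Q θ * lloss θ x y
      ≤ ∑ θ ∈ Θm, Q θ * (lloss θs x y + sig v * (-(y * dotp x θ) - v)
          + (-(y * dotp x θ) - v) ^ 2 / 8) := Finset.sum_le_sum hkey
    _ = (∑ θ ∈ Θm, Q θ) * lloss θs x y + sig v * ∑ θ ∈ Θm, Q θ * (-(y * dotp x θ) - v)
          + (∑ θ ∈ Θm, Q θ * (-(y * dotp x θ) - v) ^ 2) / 8 := by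
        rw [Finset.sum_mul, Finset.mul_sum, Finset.sum_div, ← Finset.sum_add_distrib,
          ← Finset.sum_add_distrib]
        exact Finset.sum_congr rfl fun θ _ => by ring
    _ ≤ 1 * lloss θs x y + sig v * 0 + (d * η ^ 2) / 8 := by
        rw [hQ1, hS1]
        have := hS2
        linarith
    _ = lloss θs x y + d * η ^ 2 / 8 := by ring


lemma lprob_pos {d : ℕ} (θ x : Fin d → ℝ) (y : ℝ) : 0 < lprob θ x y := by
  unfold lprob
  positivity

lemma lprob_eq_exp {d : ℕ} (θ x : Fin d → ℝ) (y : ℝ) :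
    lprob θ x y = Real.exp (-(lloss θ x y)) := by
  have h : (0:ℝ) < 1 + Real.exp (-(y * dotp x θ)) := by positivity
  unfold lprob lloss
  rw [one_div, ← Real.exp_log (inv_pos.2 h), Real.log_inv]

lemma histProb_pos {d : ℕ} (θ : Fin d → ℝ) (h : List ((Fin d → ℝ) × ℝ)) :
    0 < histProb θ h := by
  apply List.prod_pos
  intro a ha
  simp only [List.mem_map] at ha
  obtain ⟨s, -, rfl⟩ := ha
  exact lprob_pos θ s.1 s.2

lemma mixD_eq {d : ℕ} (Θm : Finset (Fin d → ℝ)) (h : List ((Fin d → ℝ) × ℝ)) :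
    mixProbD ((Θm : Set (Fin d → ℝ)).indicator fun _ => ((Θm.card : ℝ))⁻¹) h
      = (Θm.card : ℝ)⁻¹ * ∑ θ ∈ Θm, histProb θ h := by
  unfold mixProbD
  rw [tsum_eq_sum (s := Θm) (fun θ hθ => by
    rw [Set.indicator_of_notMem (by simpa using hθ), zero_mul])]
  rw [Finset.mul_sum]
  refine Finset.sum_congr rfl fun θ hθ => ?_
  rw [Set.indicator_of_mem (by simpa using hθ) (fun _ => ((Θm.card : ℝ))⁻¹)]

lemma mix_pos {d : ℕ} (Θm : Finset (Fin d → ℝ)) (hne : Θm.Nonempty)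
    (h : List ((Fin d → ℝ) × ℝ)) :
    0 < mixProbD ((Θm : Set (Fin d → ℝ)).indicator fun _ => ((Θm.card : ℝ))⁻¹) h := by
  rw [mixD_eq]
  have hc : (0 : ℝ) < Θm.card := by exact_mod_cast Finset.card_pos.2 hne
  exact mul_pos (inv_pos.2 hc) (Finset.sum_pos (fun θ _ => histProb_pos θ h) hne)

end Aux

/-- uniform-prior grid mixture bound: if some distribution `Q` supported on
the finite grid `Θ_m` has mean `θ*`, uncorrelated coordinates and coordinate variances at
most `η²`, then the Bayesian mixture with uniform prior on `Θ_m` has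
`Regret(A*,S_T,θ*) ≤ log|Θ_m| + dTη²/8`. -/
theorem stmt15 {d : ℕ} (Θm : Finset (Fin d → ℝ)) (hne : Θm.Nonempty)
    (θs : Fin d → ℝ) (η : ℝ) (hη : 0 ≤ η)
    (Q : (Fin d → ℝ) → ℝ) (hQ0 : ∀ θ, 0 ≤ Q θ) (hQsupp : ∀ θ ∉ Θm, Q θ = 0)
    (hQ1 : ∑ θ ∈ Θm, Q θ = 1)
    (hmean : ∀ i, ∑ θ ∈ Θm, Q θ * θ i = θs i)
    (huncorr : ∀ i j, i ≠ j → ∑ θ ∈ Θm, Q θ * ((θ i - θs i) * (θ j - θs j)) = 0)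
    (hvar : ∀ i, ∑ θ ∈ Θm, Q θ * (θ i - θs i) ^ 2 ≤ η ^ 2)
    {T : ℕ} (S : Fin T → (Fin d → ℝ) × ℝ) (hS : ValidSeq S) :
    regret (bayesAlgD ((Θm : Set (Fin d → ℝ)).indicator
        fun _ => ((Θm.card : ℝ))⁻¹)) S θs ≤
      Real.log Θm.card + d * T * η ^ 2 / 8 := by


  set p₀ := ((Θm : Set (Fin d → ℝ)).indicator fun _ => ((Θm.card : ℝ))⁻¹) with hp₀
  have hc : (0 : ℝ) < Θm.card := by exact_mod_cast Finset.card_pos.2 hne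
  -- telescoping of algLoss
  have htake : ∀ t : Fin T, (List.ofFn S).take t.val ++ [((S t).1, (S t).2)]
      = (List.ofFn S).take (t.val + 1) := by
    intro t
    rw [List.take_succ]
    congr 1
    have : (List.ofFn S)[t.val]? = some (S t) := by
      rw [List.getElem?_ofFn]
      simp [List.ofFnNthVal, t.isLt]
    rw [this]
    simp
  have halg : algLoss (bayesAlgD p₀) S = -Real.log (mixProbD p₀ (List.ofFn S)) := by
    unfold algLoss bayesAlgD
    have hterm : ∀ t : Fin T,
        Real.log (mixProbD p₀ ((List.ofFn S).take t.val ++ [((S t).1, (S t).2)]) /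
          mixProbD p₀ ((List.ofFn S).take t.val))
        = Real.log (mixProbD p₀ ((List.ofFn S).take (t.val + 1)))
          - Real.log (mixProbD p₀ ((List.ofFn S).take t.val)) := by
      intro t
      rw [htake t, Real.log_div (ne_of_gt (mix_pos Θm hne _)) (ne_of_gt (mix_pos Θm hne _))]
    rw [Finset.sum_congr rfl fun t _ => hterm t]
    rw [Fin.sum_univ_eq_sum_range
      (fun n => Real.log (mixProbD p₀ ((List.ofFn S).take (n + 1)))
        - Real.log (mixProbD p₀ ((List.ofFn S).take n)))]
    rw [Finset.sum_range_sub
      (fun n => Real.log (mixProbD p₀ ((List.ofFn S).take n)))]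
    have h1 : (List.ofFn S).take T = List.ofFn S := by
      rw [List.take_of_length_le (by simp)]
    have h2 : mixProbD p₀ ([] : List ((Fin d → ℝ) × ℝ)) = 1 := by
      rw [hp₀, mixD_eq]
      simp only [histProb, List.map_nil, List.prod_nil, Finset.sum_const, nsmul_eq_mul, mul_one]
      rw [inv_mul_cancel₀ (ne_of_gt hc)]
    rw [h1]
    simp [h2]
  -- value of histProb on the full sequence
  have hfull : ∀ θ : Fin d → ℝ, histProb θ (List.ofFn S) = Real.exp (-(seqLoss θ S)) := by
    intro θ
    unfold histProb
    rw [List.map_ofFn, List.prod_ofFn]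
    have : ∀ t : Fin T, ((fun s : (Fin d → ℝ) × ℝ => lprob θ s.1 s.2) ∘ S) t
        = Real.exp (-(lloss θ (S t).1 (S t).2)) := fun t => lprob_eq_exp θ (S t).1 (S t).2
    rw [Finset.prod_congr rfl fun t _ => this t, ← Real.exp_sum]
    unfold seqLoss
    rw [← Finset.sum_neg_distrib]
  -- Jensen
  have hQle1 : ∀ θ ∈ Θm, Q θ ≤ 1 := by
    intro θ hθ
    calc Q θ ≤ ∑ θ' ∈ Θm, Q θ' := Finset.single_le_sum (fun θ' _ => hQ0 θ') hθ
      _ = 1 := hQ1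
  have hjen : Real.exp (∑ θ ∈ Θm, Q θ * (-(seqLoss θ S))) ≤ ∑ θ ∈ Θm, histProb θ (List.ofFn S) := by
    have h1 : Real.exp (∑ θ ∈ Θm, Q θ * (-(seqLoss θ S)))
        ≤ ∑ θ ∈ Θm, Q θ * Real.exp (-(seqLoss θ S)) := by
      have := convexOn_exp.map_sum_le (t := Θm) (w := Q) (p := fun θ => -(seqLoss θ S))
        (fun θ _ => hQ0 θ) hQ1 (fun θ _ => Set.mem_univ _)
      simpa [smul_eq_mul] using this
    refine h1.trans (Finset.sum_le_sum fun θ hθ => ?_)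
    rw [hfull θ]
    exact mul_le_of_le_one_left (Real.exp_nonneg _) (hQle1 θ hθ)
  -- expected loss bound
  have hexp : ∑ θ ∈ Θm, Q θ * seqLoss θ S ≤ seqLoss θs S + T * (d * η ^ 2 / 8) := by
    have h1 : ∑ θ ∈ Θm, Q θ * seqLoss θ S
        = ∑ t : Fin T, ∑ θ ∈ Θm, Q θ * lloss θ (S t).1 (S t).2 := by
      rw [Finset.sum_comm]
      exact Finset.sum_congr rfl fun θ _ => by
        unfold seqLoss; rw [Finset.mul_sum]
    rw [h1]
    calc ∑ t : Fin T, ∑ θ ∈ Θm, Q θ * lloss θ (S t).1 (S t).2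
        ≤ ∑ t : Fin T, (lloss θs (S t).1 (S t).2 + d * η ^ 2 / 8) :=
          Finset.sum_le_sum fun t _ =>
            roundBound Θm θs η Q hQ0 hQ1 hmean huncorr hvar (S t).1 (hS t).1 (S t).2 (hS t).2
      _ = seqLoss θs S + T * (d * η ^ 2 / 8) := by
          rw [Finset.sum_add_distrib]
          unfold seqLoss
          simp [mul_comm]
  -- put everything together
  have hlog : -Real.log (mixProbD p₀ (List.ofFn S))
      ≤ Real.log Θm.card + seqLoss θs S + T * (d * η ^ 2 / 8) := by
    rw [hp₀, mixD_eq, Real.log_mul (by positivity)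
      (ne_of_gt (Finset.sum_pos (fun θ _ => histProb_pos _ _) hne)), Real.log_inv]
    have h2 : ∑ θ ∈ Θm, Q θ * (-(seqLoss θ S))
        ≤ Real.log (∑ θ ∈ Θm, histProb θ (List.ofFn S)) := by
      have := Real.log_le_log (Real.exp_pos _) hjen
      rwa [Real.log_exp] at this
    have h3 : -(seqLoss θs S + T * (d * η ^ 2 / 8)) ≤ ∑ θ ∈ Θm, Q θ * (-(seqLoss θ S)) := by
      have : ∑ θ ∈ Θm, Q θ * (-(seqLoss θ S)) = -∑ θ ∈ Θm, Q θ * seqLoss θ S := by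
        rw [← Finset.sum_neg_distrib]
        exact Finset.sum_congr rfl fun θ _ => by ring
      rw [this]
      linarith [hexp]
    linarith [h2.trans' h3]
  unfold regret
  rw [halg]
  have : (T : ℝ) * (d * η ^ 2 / 8) = d * T * η ^ 2 / 8 := by ring
  linarith [hlog, this ▸ hlog]
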